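/- Let A be an associative unital ℝ-algebra, n a real number, and Δ, Q, N elements of A satisfying Δ·Q − Q·Δ = −2·(2N + (n+2)·1) and N·Δ − Δ·N = −2·Δ. Then: (i) for every natural number m ≥ 1, Δ^m·Q − Q·Δ^m = −2m • Δ^{m−1}·(2N + (n + 4 − 2m)·1); (ii) if M is a module over A (compatible with the ℝ-action) and u ∈ M satisfies N·u = (m − 2 − n/2)•u, then Δ^m·(Q·u) = Q·(Δ^m·u). -/
import Mathlib

private lemma auxN {A : Type*} [Ring A] [Algebra ℝ A] (Δ N : A)
    (h₂ : N * Δ - Δ * N = (-2 : ℝ) • Δ) (m : ℕ) :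
    N * Δ ^ m = Δ ^ m * N + (-(2 * (m : ℕ) : ℝ)) • Δ ^ m := by
  induction m with
  | zero => simp
  | succ k ih =>
    have hND : N * Δ = Δ * N + (-2 : ℝ) • Δ := by
      linear_combination (norm := module) h₂
    rw [pow_succ, ← mul_assoc, ih]
    push_cast
    rw [add_mul, smul_mul_assoc, mul_assoc, hND]
    simp only [mul_add, mul_smul_comm, smul_mul_assoc, smul_add, smul_smul, ← pow_succ,
      ← mul_assoc]
    module

private lemma auxMain {A : Type*} [Ring A] [Algebra ℝ A] (n : ℝ) (Δ Q N : A)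
    (h₁ : Δ * Q - Q * Δ = (-2 : ℝ) • ((2 : ℝ) • N + (n + 2) • (1 : A)))
    (h₂ : N * Δ - Δ * N = (-2 : ℝ) • Δ) :
    ∀ m : ℕ, 1 ≤ m →
      Δ ^ m * Q - Q * Δ ^ m =
        (-(2 * (m : ℝ))) •
          (Δ ^ (m - 1) * ((2 : ℝ) • N + (n + 4 - 2 * (m : ℝ)) • (1 : A))) := by
  intro m hm
  induction m with
  | zero => omega
  | succ k ih =>
    rcases Nat.eq_or_lt_of_le hm with h | h
    · -- k = 0
      have hk : k = 0 := by omega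
      subst hk
      simpa using h₁.trans (by module)
    · have hk : 1 ≤ k := by omega
      have ihk := ih hk
      have hDQ : Δ * Q = Q * Δ + (-2 : ℝ) • ((2 : ℝ) • N + (n + 2) • (1 : A)) := by
        linear_combination (norm := module) h₁
      have hkk : k - 1 + 1 = k := by omega
      have hpow : Δ ^ k = Δ ^ (k - 1) * Δ := by rw [← pow_succ, hkk]
      have hND : N * Δ = Δ * N + (-2 : ℝ) • Δ := by
        linear_combination (norm := module) h₂
      have hXD : ((2 : ℝ) • N + (n + 4 - 2 * (k : ℝ)) • (1 : A)) * Δ =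
          Δ * ((2 : ℝ) • N + (n + 4 - 2 * (k : ℝ)) • (1 : A)) + (-4 : ℝ) • Δ := by
        simp only [add_mul, mul_add, smul_mul_assoc, mul_smul_comm, one_mul, mul_one, hND]
        module
      have e1 : Δ ^ (k+1) * Q = Δ ^ k * (Δ * Q) := by rw [pow_succ, mul_assoc]
      have e2 : Δ ^ k * Q = Q * Δ ^ k +
          (-(2 * (k : ℝ))) • (Δ ^ (k - 1) * ((2 : ℝ) • N + (n + 4 - 2 * (k : ℝ)) • (1 : A))) := by
        linear_combination (norm := module) ihk
      rw [Nat.add_sub_cancel]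
      rw [e1, hDQ, mul_add, ← mul_assoc, e2, add_mul, smul_mul_assoc,
        mul_assoc (Δ ^ (k - 1)), hXD]
      simp only [mul_add, add_mul, mul_smul_comm, smul_mul_assoc, smul_add, smul_smul,
        mul_one, pow_succ, ← mul_assoc, ← hpow]
      push_cast
      match_scalars <;> ring

theorem stmt_10
    {A : Type*} [Ring A] [Algebra ℝ A]
    (n : ℝ) (Δ Q N : A)
    (h₁ : Δ * Q - Q * Δ = (-2 : ℝ) • ((2 : ℝ) • N + (n + 2) • (1 : A)))
    (h₂ : N * Δ - Δ * N = (-2 : ℝ) • Δ)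
    (m : ℕ) (hm : 1 ≤ m) :
    (Δ ^ m * Q - Q * Δ ^ m =
      (-(2 * (m : ℝ))) •
        (Δ ^ (m - 1) * ((2 : ℝ) • N + (n + 4 - 2 * (m : ℝ)) • (1 : A)))) ∧
    (∀ (M : Type*) [AddCommGroup M] [Module ℝ M] [Module A M]
        [IsScalarTower ℝ A M] (u : M),
      N • u = ((m : ℝ) - 2 - n / 2) • u →
      (Δ ^ m) • (Q • u) = Q • ((Δ ^ m) • u)) := by
  have key := auxMain n Δ Q N h₁ h₂ m hm
  refine ⟨key, ?_⟩
  intro M _ _ _ _ u hu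
  have hcomm : Δ ^ m * Q = Q * Δ ^ m +
      (-(2 * (m : ℝ))) • (Δ ^ (m - 1) * ((2 : ℝ) • N + (n + 4 - 2 * (m : ℝ)) • (1 : A))) := by
    linear_combination (norm := module) key
  have hz : ((2 : ℝ) • N + (n + 4 - 2 * (m : ℝ)) • (1 : A)) • u = 0 := by
    rw [add_smul, smul_assoc, smul_assoc, hu, one_smul, smul_smul, ← add_smul]
    have : 2 * ((m : ℝ) - 2 - n / 2) + (n + 4 - 2 * (m : ℝ)) = 0 := by ring
    rw [this, zero_smul]
  rw [← mul_smul, hcomm, add_smul, smul_assoc, mul_smul, mul_smul, hz, smul_zero,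
    smul_zero, add_zero]
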